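/- In the triangle model over F₂ (A = F₂(Z₃), Ω¹ free on e⁺, e⁻ with e± f = R±(f)e±, Ω(Z₃) relations (e±)² = 0 and e⁺∧e⁻ + e⁻∧e⁺ = 0, metric g = e⁺⊗e⁻ + e⁻⊗e⁺): for each pair of constants α, β ∈ F₂, the connection ∇e⁺ = α e⁻⊗e⁻, ∇e⁻ = β e⁺⊗e⁺ with σ = flip is a quantum Levi-Civita connection, and its curvature R∇(e±) = (d⊗id + id∧∇)∇e± equals αβ·Vol⊗e±, where Vol = e⁺∧e⁻. In particular, the connection is flat if and only if αβ = 0. -/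
import Mathlib


/- The triangle model over F₂: A = F₂(Z₃), Ω¹ free on e⁺, e⁻ (index `true` for
+, `false` for −), Ω(Z₃) relations (e±)² = 0, e⁺∧e⁻ = e⁻∧e⁺ = Vol, de± = 0,
metric g = e⁺⊗e⁻ + e⁻⊗e⁺. 1-forms are `c : Bool → A` (coefficients of e^a),
2-tensors `c : Bool → Bool → A`, 3-tensors `c : Bool → Bool → Bool → A`. -/

/-- The algebra `A = F₂(Z₃)`. -/
abbrev Alg := ZMod 3 → ZMod 2

/-- `∂₊ f = R₊f + f`, `∂₋ f = R₋f + f`, where `(R±f)(i) = f(i±1)`. -/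
def pd (b : Bool) (f : Alg) : Alg :=
  fun i => (if b then f (i + 1) else f (i - 1)) + f i

/-- The connection `∇e⁺ = α e⁻⊗e⁻`, `∇e⁻ = β e⁺⊗e⁺`, extended by the Leibniz
rule to `∇(f⁺e⁺ + f⁻e⁻)`; component `(a,b)` of the output. -/
def nabla1 (α β : ZMod 2) (c : Bool → Alg) : Bool → Bool → Alg :=
  fun a b => pd a (c b) +
    (match a, b with
      | false, false => fun i => α * c true i
      | true, true => fun i => β * c false i
      | _, _ => 0)

/-- `σ` = flip on tensor products of `e⁺, e⁻`. -/
def sigma (c : Bool → Bool → Alg) : Bool → Bool → Alg := fun a b => c b a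

/-- Wedge to `Ω² = A·Vol`: `e⁺∧e⁻ = e⁻∧e⁺ = Vol`, `(e±)² = 0`. -/
def wedge (c : Bool → Bool → Alg) : Alg := c true false + c false true

/-- `d` on 1-forms: `d(f⁺e⁺ + f⁻e⁻) = (∂₋f⁺ + ∂₊f⁻)·Vol` (as `de± = 0`). -/
def dOm (c : Bool → Alg) : Alg := pd false (c true) + pd true (c false)

/-- The tensor product connection
`∇₂(f e^a⊗e^b) = ∇(f e^a)⊗e^b + (σ⊗id)(f e^a ⊗ ∇e^b)`; component `(u,v,w)`. -/
def nabla2 (α β : ZMod 2) (c : Bool → Bool → Alg) : Bool → Bool → Bool → Alg :=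
  fun u v w => pd u (c v w) +
    (if u = false ∧ v = false then fun i => α * c true w i else 0) +
    (if u = true ∧ v = true then fun i => β * c false w i else 0) +
    (if u = false ∧ w = false then fun i => α * c v true i else 0) +
    (if u = true ∧ w = true then fun i => β * c v false i else 0)

/-- The unique quantum metric `g = e⁺⊗e⁻ + e⁻⊗e⁺`. -/
def gMet : Bool → Bool → Alg := fun a b => if a ≠ b then 1 else 0

/-- The curvature `R∇ = (d⊗id + id∧∇)∇` on a 1-form `c`, valued in
`Ω²⊗Ω¹ = A·Vol⊗Ω¹`; component `w` is the coefficient of `Vol⊗e^w`. -/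
def curv (α β : ZMod 2) (c : Bool → Alg) : Bool → Alg :=
  fun w => pd false (nabla1 α β c true w) + pd true (nabla1 α β c false w) +
    (if w then fun i => β * nabla1 α β c false false i
     else fun i => α * nabla1 α β c true true i)

/-- The basis 1-forms `e⁺` (`s = true`) and `e⁻` (`s = false`). -/
def ebasis (s : Bool) : Bool → Alg := fun b => if b = s then 1 else 0

/-- On the triangle with `Ω(Z₃)`: for each `α, β ∈ F₂` the connection
`∇e⁺ = α e⁻⊗e⁻`, `∇e⁻ = β e⁺⊗e⁺` with `σ` = flip is a QLC (torsion free and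
metric compatible), its curvature is `R∇(e±) = αβ·Vol⊗e±`, and it is flat iff
`αβ = 0`. -/
theorem triangle_QLC_curvature (α β : ZMod 2) :
    (∀ ω : Bool → Alg, wedge (nabla1 α β ω) = dOm ω) ∧
    nabla2 α β gMet = 0 ∧
    (∀ s : Bool, curv α β (ebasis s) = fun w => fun _ => α * β * (if w = s then 1 else 0)) ∧
    ((∀ c : Bool → Alg, curv α β c = 0) ↔ α * β = 0) := by
  refine ⟨?_, ?_, ?_, ?_⟩
  · revert α β; decide
  · revert α β; decide
  · revert α β; decide
  · revert α β; decide
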